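/- arXiv:1410.6046 — 2 statements merged into one kernel-verified Lean document; each statement's English description precedes it below -/
import Mathlib

section
/- Let a be the (0,1)-vector whose first k components equal 1 and all remaining components equal 0. Then for all permutations σ, τ: σ occurs in τ as an a-vincular pattern if and only if σ ≤_a τ in the a-vincular pattern poset. -/
open scoped Classical

/-- A finite permutation of arbitrary length: a length `n` together with a
permutation of `Fin n` (in one-line notation, the entry at position `i` is
its value at `i`). -/
abbrev QPerm : Type := Σ n : ℕ, Equiv.Perm (Fin n)

/-- `IsOcc a σ τ f` : the strictly monotone position map `f` selects an
occurrence of the pattern `σ` in `τ` (order-isomorphically), where for every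
gap index `j ≥ 1` (1-indexed) with `a j = false` the `j`-th and `(j+1)`-th
selected positions must be adjacent in `τ`. -/
def IsOcc (a : ℕ → Bool) {k n : ℕ} (σ : Equiv.Perm (Fin k)) (τ : Equiv.Perm (Fin n))
    (f : Fin k → Fin n) : Prop :=
  StrictMono f ∧ (∀ i j : Fin k, σ i < σ j ↔ τ (f i) < τ (f j)) ∧
    ∀ (i : ℕ) (h : i + 1 < k), a (i + 1) = false →
      (f ⟨i + 1, h⟩ : ℕ) = (f ⟨i, Nat.lt_of_succ_lt h⟩ : ℕ) + 1

/-- `σ` occurs in `τ` as an `a`-vincular pattern. -/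
def VOcc (a : ℕ → Bool) (σ τ : QPerm) : Prop :=
  ∃ f : Fin σ.1 → Fin τ.1, IsOcc a σ.2 τ.2 f

/-- Covering relation of the `a`-vincular pattern poset. -/
def VCov (a : ℕ → Bool) (σ τ : QPerm) : Prop :=
  σ.1 + 1 = τ.1 ∧ VOcc a σ τ

/-- The `a`-vincular pattern order: reflexive-transitive closure of covering. -/
def VLe (a : ℕ → Bool) (σ τ : QPerm) : Prop :=
  Relation.ReflTransGen (VCov a) σ τ

/-- Occurrence as an `A`-vincular pattern for a matrix `A` (rows and columns
1-indexed via `A i j`); a pattern of length `k` uses row `k - 1`. -/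
def MOcc (A : ℕ → ℕ → Bool) (σ τ : QPerm) : Prop :=
  VOcc (fun j => A (σ.1 - 1) j) σ τ

/-- Covering relation of the `A`-vincular pattern poset. -/
def MCov (A : ℕ → ℕ → Bool) (σ τ : QPerm) : Prop :=
  σ.1 + 1 = τ.1 ∧ MOcc A σ τ

/-- The `A`-vincular pattern order. -/
def MLe (A : ℕ → ℕ → Bool) (σ τ : QPerm) : Prop :=
  Relation.ReflTransGen (MCov A) σ τ

/-- The quasi-consecutive adjacency vector `a = (1,0,0,…)` (1-indexed). -/
def qa : ℕ → Bool := fun j => decide (j = 1)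

/-- Quasi-consecutive pattern occurrence. -/
def QOcc (σ τ : QPerm) : Prop := VOcc qa σ τ

/-- Covering in the quasi-consecutive pattern poset. -/
def QCov (σ τ : QPerm) : Prop := VCov qa σ τ

/-- The quasi-consecutive pattern poset order. -/
def QLe (σ τ : QPerm) : Prop := VLe qa σ τ

/-- All permutations of length at most `n`, as a finset. -/
def permsUpTo (n : ℕ) : Finset QPerm :=
  (Finset.range (n + 1)).sigma fun _ => Finset.univ

/-- Möbius function of the quasi-consecutive pattern poset, computed with
fuel (the fuel `τ.1` always suffices, since lengths strictly increase along
the order). -/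
noncomputable def qMuAux : ℕ → QPerm → QPerm → ℤ
  | 0, σ, τ => if σ = τ then 1 else 0
  | m + 1, σ, τ =>
      if σ = τ then 1
      else -∑ z ∈ (permsUpTo τ.1).filter fun z => QLe σ z ∧ QLe z τ ∧ z ≠ τ,
            qMuAux m σ z

/-- The Möbius function of the quasi-consecutive pattern poset. -/
noncomputable def qMu (σ τ : QPerm) : ℤ := qMuAux τ.1 σ τ

/-- The interval `[σ, τ]` in the quasi-consecutive pattern poset. -/
def QInterval (σ τ : QPerm) : Set QPerm := {ρ | QLe σ ρ ∧ QLe ρ τ}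

/-- The interval `[σ, τ]` is a chain. -/
def QChain (σ τ : QPerm) : Prop :=
  ∀ ρ₁ ρ₂ : QPerm, ρ₁ ∈ QInterval σ τ → ρ₂ ∈ QInterval σ τ → QLe ρ₁ ρ₂ ∨ QLe ρ₂ ρ₁

/-- The interval `[σ, τ]` is order-isomorphic to the product of a chain with
`p + 1` elements and a chain with `q + 1` elements (componentwise order). -/
def IsGridInterval (σ τ : QPerm) (p q : ℕ) : Prop :=
  ∃ e : QInterval σ τ ≃ Fin (p + 1) × Fin (q + 1),
    ∀ ρ₁ ρ₂ : QInterval σ τ, QLe ρ₁.1 ρ₂.1 ↔ e ρ₁ ≤ e ρ₂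

/-- The occurrence `f` involves position `i` (0-indexed) of the big permutation. -/
def Involves {k n : ℕ} (f : Fin k → Fin n) (i : ℕ) : Prop :=
  ∃ j : Fin k, (f j : ℕ) = i

/-- The occurrence `f` is consecutive: all selected positions are adjacent. -/
def ConsecOcc {k n : ℕ} (f : Fin k → Fin n) : Prop :=
  ∀ (i : ℕ) (h : i + 1 < k),
    (f ⟨i + 1, h⟩ : ℕ) = (f ⟨i, Nat.lt_of_succ_lt h⟩ : ℕ) + 1

/-- The first two entries of `τ` are not consecutive integers. -/
def NotConsecFirstTwo (τ : QPerm) : Prop :=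
  ∀ i j : Fin τ.1, (i : ℕ) = 0 → (j : ℕ) = 1 →
    (τ.2 i : ℕ) + 1 ≠ (τ.2 j : ℕ) ∧ (τ.2 j : ℕ) + 1 ≠ (τ.2 i : ℕ)

/-- `τ` is a monotone (increasing or decreasing) permutation. -/
def IsMonotonePerm (τ : QPerm) : Prop :=
  (∀ i j : Fin τ.1, i < j → τ.2 i < τ.2 j) ∨ (∀ i j : Fin τ.1, i < j → τ.2 j < τ.2 i)

-- === auxiliary ===
lemma fin_le_apply {m n : ℕ} {f : Fin m → Fin n} (hf : StrictMono f) :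
    ∀ (v : ℕ) (hv : v < m), v ≤ (f ⟨v, hv⟩ : ℕ) := by
  intro v
  induction v with
  | zero => intro _; exact Nat.zero_le _
  | succ w ih =>
    intro hv
    have h1 := ih (Nat.lt_of_succ_lt hv)
    have h2 : f ⟨w, Nat.lt_of_succ_lt hv⟩ < f ⟨w + 1, hv⟩ := hf (by simp [Fin.lt_def])
    rw [Fin.lt_def] at h2
    omega

lemma succAbove_val {n : ℕ} (p : Fin (n + 1)) (i : Fin n) :
    (p.succAbove i : ℕ) = if (i : ℕ) < (p : ℕ) then (i : ℕ) else (i : ℕ) + 1 := by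
  rcases lt_or_ge (Fin.castSucc i) p with h | h
  · rw [Fin.succAbove_of_castSucc_lt _ _ h]
    have : (i : ℕ) < (p : ℕ) := by simpa [Fin.lt_def] using h
    simp [this]
  · rw [Fin.succAbove_of_le_castSucc _ _ h]
    have : (p : ℕ) ≤ (i : ℕ) := by simpa [Fin.le_def] using h
    simp [Nat.not_lt.mpr this]

def delPerm {n : ℕ} (τ : Equiv.Perm (Fin (n + 1))) (p : Fin (n + 1)) :
    Equiv.Perm (Fin n) :=
  Equiv.removeNone ((finSuccEquiv' p).symm.trans (τ.trans (finSuccEquiv' (τ p))))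

lemma delPerm_spec {n : ℕ} (τ : Equiv.Perm (Fin (n + 1))) (p : Fin (n + 1)) (i : Fin n) :
    (τ p).succAbove (delPerm τ p i) = τ (p.succAbove i) := by
  have hne : τ (p.succAbove i) ≠ τ p := fun h => Fin.succAbove_ne p i (τ.injective h)
  obtain ⟨j, hj⟩ := Fin.exists_succAbove_eq hne
  have he : ((finSuccEquiv' p).symm.trans (τ.trans (finSuccEquiv' (τ p)))) (some i) = some j := by
    simp [Equiv.trans_apply, finSuccEquiv'_symm_some, ← hj]
  have h2 := Equiv.removeNone_some _ ⟨j, he⟩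
  rw [he] at h2
  rw [delPerm]
  have : Equiv.removeNone ((finSuccEquiv' p).symm.trans (τ.trans (finSuccEquiv' (τ p)))) i = j :=
    Option.some_injective _ h2
  rw [this, hj]

lemma aIO_false {k j : ℕ} (h : (decide (1 ≤ j ∧ j ≤ k) : Bool) = false) : j = 0 ∨ k < j := by
  simp at h
  omega

lemma aIO_false_of {k j : ℕ} (h : k < j) : (decide (1 ≤ j ∧ j ≤ k) : Bool) = false := by
  simp; omega

lemma vocc_refl (k : ℕ) (σ : QPerm) : VOcc (fun j => decide (1 ≤ j ∧ j ≤ k)) σ σ := by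
  refine ⟨id, strictMono_id, fun i j => Iff.rfl, fun i h _ => rfl⟩

lemma vocc_trans (k : ℕ) {σ ρ τ : QPerm}
    (h1 : VOcc (fun j => decide (1 ≤ j ∧ j ≤ k)) σ ρ)
    (h2 : VOcc (fun j => decide (1 ≤ j ∧ j ≤ k)) ρ τ) :
    VOcc (fun j => decide (1 ≤ j ∧ j ≤ k)) σ τ := by
  obtain ⟨g, hgm, hgv, hga⟩ := h1
  obtain ⟨f, hfm, hfv, hfa⟩ := h2
  refine ⟨f ∘ g, hfm.comp hgm, fun i j => (hgv i j).trans (hfv _ _), ?_⟩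
  intro i h ha
  have hk : k < i + 1 := by rcases aIO_false ha with h' | h'; omega; exact h'
  have hg := hga i h ha
  set x : Fin ρ.1 := g ⟨i, Nat.lt_of_succ_lt h⟩ with hx
  have hxi : (i : ℕ) ≤ (x : ℕ) := fin_le_apply hgm i (Nat.lt_of_succ_lt h)
  have hx1 : (x : ℕ) + 1 < ρ.1 := by
    have := (g ⟨i + 1, h⟩).isLt; omega
  have hf := hfa (x : ℕ) hx1 (aIO_false_of (by omega))
  have e1 : g ⟨i + 1, h⟩ = ⟨(x : ℕ) + 1, hx1⟩ := Fin.ext (by simpa using hg)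
  have e2 : (⟨(x : ℕ), Nat.lt_of_succ_lt hx1⟩ : Fin ρ.1) = x := Fin.ext rfl
  simp only [Function.comp_apply, e1]
  rw [hf, e2]

lemma exists_good (k : ℕ) {m n : ℕ} (f : Fin m → Fin (n + 1)) (hmono : StrictMono f)
    (hadj : ∀ (i : ℕ) (h : i + 1 < m), (decide (1 ≤ i + 1 ∧ i + 1 ≤ k) : Bool) = false →
      (f ⟨i + 1, h⟩ : ℕ) = (f ⟨i, Nat.lt_of_succ_lt h⟩ : ℕ) + 1)
    (hlt : m < n + 1) :
    ∃ p : Fin (n + 1), ((p : ℕ) ≤ k ∨ (p : ℕ) = n) ∧ ∀ j, f j ≠ p := by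
  by_contra hc
  push_neg at hc
  have hc' : ∀ p : Fin (n + 1), ((p : ℕ) ≤ k ∨ (p : ℕ) = n) → ∃ j, f j = p := hc
  have claim : ∀ (v : ℕ) (hv : v < m), (f ⟨v, hv⟩ : ℕ) = v := by
    intro v
    induction v with
    | zero =>
      intro hv
      obtain ⟨j, hj⟩ := hc' ⟨0, Nat.succ_pos n⟩ (Or.inl (Nat.zero_le k))
      have : f ⟨0, hv⟩ ≤ f j := hmono.monotone (by simp [Fin.le_def])
      rw [hj] at this
      simpa using Nat.le_zero.mp this
    | succ w ih =>
      intro hv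
      have hw := ih (Nat.lt_of_succ_lt hv)
      by_cases hkw : k ≤ w
      · rw [hadj w hv (aIO_false_of (by omega)), hw]
      · have hwn : w + 1 < n + 1 := by omega
        obtain ⟨j, hj⟩ := hc' ⟨w + 1, hwn⟩ (Or.inl (show w + 1 ≤ k by omega))
        have hjv : (f j : ℕ) = w + 1 := by rw [hj]
        have hjw : w + 1 ≤ (j : ℕ) := by
          by_contra hcon
          push_neg at hcon
          have hle : f j ≤ f ⟨w, Nat.lt_of_succ_lt hv⟩ :=
            hmono.monotone (by rw [Fin.le_def]; simp; omega)
          rw [Fin.le_def] at hle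
          omega
        have h1 : f ⟨w + 1, hv⟩ ≤ f j :=
          hmono.monotone (by rw [Fin.le_def]; simp; omega)
        have h2 : f ⟨w, Nat.lt_of_succ_lt hv⟩ < f ⟨w + 1, hv⟩ :=
          hmono (by simp [Fin.lt_def])
        rw [Fin.le_def] at h1
        rw [Fin.lt_def] at h2
        omega
  obtain ⟨j, hj⟩ := hc' ⟨n, Nat.lt_succ_self n⟩ (Or.inr rfl)
  have hm : 0 < m := Nat.pos_of_ne_zero (by rintro rfl; exact j.elim0)
  have hjle : f j ≤ f ⟨m - 1, by omega⟩ := hmono.monotone (by rw [Fin.le_def]; simp; omega)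
  rw [hj, Fin.le_def, claim (m - 1) (by omega)] at hjle
  simp at hjle
  omega

lemma vle_of_vocc (k : ℕ) : ∀ (n : ℕ) (τ : QPerm), τ.1 = n → ∀ σ : QPerm,
    VOcc (fun j => decide (1 ≤ j ∧ j ≤ k)) σ τ →
    VLe (fun j => decide (1 ≤ j ∧ j ≤ k)) σ τ := by
  intro n
  induction n using Nat.strong_induction_on with
  | _ n ih =>
  rintro ⟨nt, τ⟩ hnt ⟨m, σ⟩ ⟨f, hmono, hval, hadj⟩
  dsimp only at hnt f hmono hval hadj
  subst hnt
  rcases eq_or_lt_of_le (show m ≤ nt by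
      rcases Nat.eq_zero_or_pos m with h0 | h0
      · omega
      · have := fin_le_apply hmono (m - 1) (by omega)
        have := (f ⟨m - 1, by omega⟩).isLt
        omega) with heq | hlt
  · -- equal lengths: σ = τ
    subst heq
    have hsurj : Function.Surjective f :=
      (Finite.injective_iff_surjective).mp hmono.injective
    have hwf : WellFoundedLT (Fin m) := Finite.to_wellFoundedLT
    have hid : StrictMono (id : Fin m → Fin m) := strictMono_id
    have hfid : f = id := by
      rw [(hmono.range_inj hid).1]
      rw [Set.range_id, Set.range_eq_univ.mpr hsurj]
    have hst : σ = τ := by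
      have hu : StrictMono (fun x => τ (σ.symm x)) := by
        intro x y hxy
        have := (hval (σ.symm x) (σ.symm y)).mp (by simpa using hxy)
        simpa [hfid] using this
      have husurj : Function.Surjective (fun x => τ (σ.symm x)) :=
        τ.surjective.comp σ.symm.surjective
      have huid : (fun x => τ (σ.symm x)) = id := by
        rw [(hu.range_inj hid).1]
        rw [Set.range_id, Set.range_eq_univ.mpr husurj]
      apply Equiv.ext
      intro i
      have := congrFun huid (σ i)
      simpa using this.symm
    rw [hst]
    exact Relation.ReflTransGen.refl
  · -- strict: delete a point
    obtain ⟨nn, rfl⟩ : ∃ nn, nt = nn + 1 := ⟨nt - 1, by omega⟩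
    obtain ⟨p, hp_ok, hp_not⟩ := exists_good k f hmono hadj (by omega)
    have hsa : StrictMono (p.succAbove) := Fin.strictMono_succAbove p
    have hqa : StrictMono ((τ p).succAbove) := Fin.strictMono_succAbove (τ p)
    -- occurrence of τ' in τ
    have hoccT : VOcc (fun j => decide (1 ≤ j ∧ j ≤ k)) ⟨nn, delPerm τ p⟩ ⟨nn + 1, τ⟩ := by
      refine ⟨p.succAbove, hsa, ?_, ?_⟩
      · intro i j
        show delPerm τ p i < delPerm τ p j ↔ τ (p.succAbove i) < τ (p.succAbove j)
        rw [← delPerm_spec τ p i, ← delPerm_spec τ p j]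
        exact hqa.lt_iff_lt.symm
      · intro i h ha
        have hk : k < i + 1 := by rcases aIO_false ha with h' | h'; omega; exact h'
        have e1 : ((⟨i + 1, h⟩ : Fin nn) : ℕ) = i + 1 := rfl
        have e2 : ((⟨i, Nat.lt_of_succ_lt h⟩ : Fin nn) : ℕ) = i := rfl
        rw [succAbove_val, succAbove_val, e1, e2]
        rcases hp_ok with hp | hp <;> split_ifs <;> omega
    -- induced occurrence of σ in τ'
    have hgex : ∀ j : Fin m, ∃ i : Fin nn, p.succAbove i = f j :=
      fun j => Fin.exists_succAbove_eq (hp_not j)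
    choose g hg using hgex
    have hoccS : VOcc (fun j => decide (1 ≤ j ∧ j ≤ k)) ⟨m, σ⟩ ⟨nn, delPerm τ p⟩ := by
      refine ⟨g, ?_, ?_, ?_⟩
      · intro x y hxy
        have : p.succAbove (g x) < p.succAbove (g y) := by rw [hg, hg]; exact hmono hxy
        exact hsa.lt_iff_lt.mp this
      · intro i j
        show σ i < σ j ↔ delPerm τ p (g i) < delPerm τ p (g j)
        rw [hval i j, ← hg i, ← hg j, ← delPerm_spec τ p (g i), ← delPerm_spec τ p (g j)]
        exact hqa.lt_iff_lt
      · intro i h ha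
        have hf := hadj i h ha
        have e1 := congrArg Fin.val (hg ⟨i + 1, h⟩)
        have e2 := congrArg Fin.val (hg ⟨i, Nat.lt_of_succ_lt h⟩)
        rw [succAbove_val] at e1 e2
        split_ifs at e1 e2 <;> omega
    have hle : VLe (fun j => decide (1 ≤ j ∧ j ≤ k)) ⟨m, σ⟩ ⟨nn, delPerm τ p⟩ :=
      ih nn (by omega) ⟨nn, delPerm τ p⟩ rfl ⟨m, σ⟩ hoccS
    exact hle.tail ⟨rfl, hoccT⟩


/-- If `a` has its first `k` components equal to `1` and all remaining ones
equal to `0`, then occurrence as an `a`-vincular pattern coincides with the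
`a`-vincular pattern order. -/
theorem vocc_iff_vle_of_initial_ones (k : ℕ) (σ τ : QPerm) :
    VOcc (fun j => decide (1 ≤ j ∧ j ≤ k)) σ τ ↔
      VLe (fun j => decide (1 ≤ j ∧ j ≤ k)) σ τ := by
  constructor
  · exact vle_of_vocc k τ.1 τ rfl σ
  · intro h
    induction h with
    | refl => exact vocc_refl k σ
    | tail _ hcov ih => exact vocc_trans k ih hcov.2
end

section
/- In the quasi-consecutive pattern poset, suppose σ occurs precisely once in τ = a_1 a_2 ⋯ a_n and the unique occurrence involves a_1 but not a_2 and not a_n. Then the interval [σ, τ] is isomorphic to a product of two chains each of length at least 1; consequently μ(σ, τ) = 1 if [σ, τ] has rank 2, and μ(σ, τ) = 0 otherwise. -/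
open scoped Classical

section Std

variable {m : ℕ}

/-- number of indices with smaller value -/
def stdv (v : Fin m → ℕ) (i : Fin m) : ℕ := (Finset.univ.filter fun j => v j < v i).card

lemma stdv_lt (v : Fin m → ℕ) (i : Fin m) : stdv v i < m := by
  have h : (Finset.univ.filter fun j => v j < v i) ⊆ Finset.univ.erase i := by
    intro j hj
    simp only [Finset.mem_filter] at hj
    refine Finset.mem_erase.2 ⟨?_, Finset.mem_univ _⟩
    rintro rfl; exact lt_irrefl _ hj.2
  have := Finset.card_le_card h
  have h2 : (Finset.univ.erase i).card < m := by
    have := Finset.card_erase_lt_of_mem (Finset.mem_univ i)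
    simpa using this
  exact lt_of_le_of_lt this h2

lemma stdv_lt_iff {v : Fin m → ℕ} (hv : Function.Injective v) {i j : Fin m} :
    stdv v i < stdv v j ↔ v i < v j := by
  have key : ∀ i j : Fin m, v i < v j → stdv v i < stdv v j := by
    intro i j hij
    apply Finset.card_lt_card
    constructor
    · intro x hx
      simp only [Finset.mem_filter, Finset.mem_univ, true_and] at hx ⊢
      exact lt_trans hx hij
    · intro hsub
      have hi : i ∈ Finset.univ.filter fun x => v x < v j := by
        simp only [Finset.mem_filter, Finset.mem_univ, true_and]; exact hij
      have := hsub hi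
      simp only [Finset.mem_filter, Finset.mem_univ, true_and] at this
      exact lt_irrefl _ this
  constructor
  · intro h
    rcases lt_trichotomy (v i) (v j) with h' | h' | h'
    · exact h'
    · exact absurd (hv h') (by rintro rfl; exact lt_irrefl _ h)
    · exact absurd (key _ _ h') (by omega)
  · exact key i j

noncomputable def std (v : Fin m → ℕ) (hv : Function.Injective v) : Equiv.Perm (Fin m) :=
  Equiv.ofBijective (fun i => (⟨stdv v i, stdv_lt v i⟩ : Fin m))
    ((Finite.injective_iff_bijective).1 (by
      intro i j hij
      simp only [Fin.mk.injEq] at hij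
      by_contra hne
      rcases lt_trichotomy (v i) (v j) with h' | h' | h'
      · have := (stdv_lt_iff hv).2 h'; omega
      · exact hne (hv h')
      · have := (stdv_lt_iff hv).2 h'; omega))

lemma std_apply (v : Fin m → ℕ) (hv : Function.Injective v) (i : Fin m) :
    ((std v hv i : Fin m) : ℕ) = stdv v i := rfl

lemma std_lt_iff {v : Fin m → ℕ} (hv : Function.Injective v) {i j : Fin m} :
    std v hv i < std v hv j ↔ v i < v j := by
  rw [Fin.lt_def]
  simpa [std_apply] using stdv_lt_iff hv

lemma strictMono_fin_le {a b : ℕ} {g : Fin a → Fin b} (hg : StrictMono g) :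
    ∀ i : Fin a, (i : ℕ) ≤ g i := by
  have key : ∀ (v : ℕ) (h : v < a), v ≤ g ⟨v, h⟩ := by
    intro v
    induction v with
    | zero => intro h; exact Nat.zero_le _
    | succ v ih =>
      intro h
      have h' : v < a := Nat.lt_of_succ_lt h
      have hlt : g ⟨v, h'⟩ < g ⟨v+1, h⟩ := hg (by simp [Fin.lt_def])
      have := ih h'
      rw [Fin.lt_def] at hlt
      omega
  intro i
  have := key i.1 i.2
  simpa using this

/-- a strictly monotone self-map of `Fin m` is the identity -/
lemma strictMono_fin_id (g : Fin m → Fin m) (hg : StrictMono g) : ∀ i, g i = i := by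
  have hinj : Function.Injective g := hg.injective
  have hbij : Function.Bijective g := (Finite.injective_iff_bijective).1 hinj
  set e := Equiv.ofBijective g hbij with he
  have heg : ∀ x, e x = g x := fun x => rfl
  have hle : ∀ i : Fin m, (i:ℕ) ≤ g i := strictMono_fin_le hg
  have hsymmono : StrictMono e.symm := by
    intro a b hab
    rcases lt_trichotomy (e.symm a) (e.symm b) with h | h | h
    · exact h
    · have hab2 : a = b := e.symm.injective h
      subst hab2
      exact absurd hab (lt_irrefl _)
    · have h2 := hg h
      rw [← heg, ← heg, e.apply_symm_apply, e.apply_symm_apply] at h2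
      exact absurd hab (by simp only [not_lt]; exact le_of_lt h2)
  have hle2 : ∀ i : Fin m, (i:ℕ) ≤ e.symm i := strictMono_fin_le hsymmono
  intro i
  have h1 := hle i
  have h2 : (g i : ℕ) ≤ i := by
    have h3 : g i ≤ g (e.symm i) := hg.monotone (by rw [Fin.le_def]; exact hle2 i)
    have h4 : g (e.symm i) = i := by rw [← heg, e.apply_symm_apply]
    rw [h4] at h3
    exact h3
  exact Fin.ext (by omega)

lemma perm_ext {m : ℕ} (r1 r2 : Equiv.Perm (Fin m))
    (h : ∀ i j, r1 i < r1 j ↔ r2 i < r2 j) : r1 = r2 := by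
  have hsm : StrictMono (fun x => r2 (r1.symm x)) := by
    intro a b hab
    have := (h (r1.symm a) (r1.symm b)).1 (by rwa [r1.apply_symm_apply, r1.apply_symm_apply])
    exact this
  have hid := strictMono_fin_id _ hsm
  ext i : 1
  have := hid (r1 i)
  simp only [r1.symm_apply_apply] at this
  rw [this]

/-- a permutation with given comparisons equals std -/
lemma eq_std {m : ℕ} (r : Equiv.Perm (Fin m)) (v : Fin m → ℕ) (hv : Function.Injective v)
    (h : ∀ i j, r i < r j ↔ v i < v j) : r = std v hv :=
  perm_ext _ _ (fun i j => (h i j).trans (std_lt_iff hv).symm)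

end Std
section Occ

lemma qa_succ_false {i : ℕ} (h : 1 ≤ i) : qa (i + 1) = false := by
  simp only [qa, decide_eq_false_iff_not]
  omega

lemma isOcc_comp {k l n : ℕ} {σ : Equiv.Perm (Fin k)} {ρ : Equiv.Perm (Fin l)}
    {τ : Equiv.Perm (Fin n)} {g : Fin k → Fin l} {c : Fin l → Fin n}
    (hg : IsOcc qa σ ρ g) (hc : IsOcc qa ρ τ c) : IsOcc qa σ τ (fun i => c (g i)) := by
  obtain ⟨hg1, hg2, hg3⟩ := hg
  obtain ⟨hc1, hc2, hc3⟩ := hc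
  refine ⟨fun a b hab => hc1 (hg1 hab), fun i j => (hg2 i j).trans (hc2 _ _), ?_⟩
  intro i hi hqa
  have h1i : 1 ≤ i := by
    by_contra h
    have : i = 0 := by omega
    subst this
    simp [qa] at hqa
  have hadj : (g ⟨i + 1, hi⟩ : ℕ) = (g ⟨i, Nat.lt_of_succ_lt hi⟩ : ℕ) + 1 := hg3 i hi hqa
  set j : ℕ := (g ⟨i, Nat.lt_of_succ_lt hi⟩ : ℕ) with hj
  have hjge : 1 ≤ j := by
    have := strictMono_fin_le hg1 ⟨i, Nat.lt_of_succ_lt hi⟩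
    simp only [← hj] at this
    omega
  have hjlt : j + 1 < l := by
    have := (g ⟨i + 1, hi⟩).2
    omega
  have hcadj := hc3 j hjlt (qa_succ_false hjge)
  have e1 : g ⟨i + 1, hi⟩ = ⟨j + 1, hjlt⟩ := Fin.ext hadj
  have e2 : g ⟨i, Nat.lt_of_succ_lt hi⟩ = ⟨j, by omega⟩ := Fin.ext rfl
  show (c (g ⟨i+1, hi⟩) : ℕ) = (c (g ⟨i, Nat.lt_of_succ_lt hi⟩) : ℕ) + 1
  rw [e1, e2, hcadj]

lemma isOcc_id {k : ℕ} (σ : Equiv.Perm (Fin k)) : IsOcc qa σ σ (fun i => i) := by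
  refine ⟨fun a b hab => hab, fun i j => Iff.rfl, ?_⟩
  intro i hi _
  rfl

lemma QLe.exists_occ {σ τ : QPerm} (h : QLe σ τ) : ∃ g : Fin σ.1 → Fin τ.1, IsOcc qa σ.2 τ.2 g := by
  induction h with
  | refl => exact ⟨fun i => i, isOcc_id _⟩
  | tail _ hcov ih =>
    obtain ⟨g, hg⟩ := ih
    obtain ⟨_, c, hc⟩ := hcov
    exact ⟨fun i => c (g i), isOcc_comp hg hc⟩

lemma QLe.len_le {σ τ : QPerm} (h : QLe σ τ) : σ.1 ≤ τ.1 := by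
  induction h with
  | refl => exact le_refl _
  | tail _ hcov ih =>
    have := hcov.1
    omega

lemma QLe.len_lt {σ τ : QPerm} (h : QLe σ τ) (hne : σ ≠ τ) : σ.1 < τ.1 := by
  induction h with
  | refl => exact absurd rfl hne
  | @tail b c _ hcov ih =>
    have h1 := hcov.1
    by_cases hb : σ = b
    · subst hb; omega
    · have := ih hb; omega

lemma QLe.eq_of_len_le {σ τ : QPerm} (h : QLe σ τ) (hlen : τ.1 ≤ σ.1) : σ = τ := by
  by_contra hne
  have := h.len_lt hne
  omega

lemma qperm_len_zero_eq (σ τ : QPerm) (h1 : σ.1 = 0) (h2 : τ.1 = 0) : σ = τ := by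
  obtain ⟨a, sa⟩ := σ
  obtain ⟨b, sb⟩ := τ
  simp only at h1 h2
  subst h1; subst h2
  congr 1
  exact Subsingleton.elim _ _

lemma qMuAux_const_of_len_zero (σ z : QPerm) (hz0 : z.1 = 0) (F : ℕ) :
    qMuAux F σ z = if σ = z then 1 else 0 := by
  cases F with
  | zero => rfl
  | succ m =>
    by_cases hσ : σ = z
    · simp [qMuAux, hσ]
    · simp only [qMuAux, hσ, if_false, neg_eq_zero]
      have h : (permsUpTo z.1).filter (fun w => QLe σ w ∧ QLe w z ∧ w ≠ z) = ∅ := by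
        rw [Finset.filter_eq_empty_iff]
        intro w _
        rintro ⟨hw1, hw2, hw3⟩
        have := hw2.len_le
        exact hw3 (qperm_len_zero_eq w z (by omega) hz0)
      rw [h, Finset.sum_empty]

lemma qMuAux_congr : ∀ (z : QPerm) (F1 F2 : ℕ) (σ : QPerm), z.1 ≤ F1 → z.1 ≤ F2 →
    qMuAux F1 σ z = qMuAux F2 σ z := by
  have main : ∀ (L : ℕ) (z : QPerm), z.1 ≤ L → ∀ (F1 F2 : ℕ) (σ : QPerm), z.1 ≤ F1 → z.1 ≤ F2 →
      qMuAux F1 σ z = qMuAux F2 σ z := by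
    intro L
    induction L with
    | zero =>
      intro z hz F1 F2 σ h1 h2
      rw [qMuAux_const_of_len_zero σ z (by omega) F1, qMuAux_const_of_len_zero σ z (by omega) F2]
    | succ L ih =>
      intro z hz F1 F2 σ h1 h2
      by_cases hσ : σ = z
      · have hc : ∀ F, qMuAux F σ z = 1 := by
          intro F
          cases F with
          | zero => simp [qMuAux, hσ]
          | succ m => simp [qMuAux, hσ]
        rw [hc F1, hc F2]
      · by_cases hz0 : z.1 = 0
        · rw [qMuAux_const_of_len_zero σ z hz0 F1, qMuAux_const_of_len_zero σ z hz0 F2]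
        · obtain ⟨F1', rfl⟩ : ∃ F', F1 = F' + 1 := ⟨F1 - 1, by omega⟩
          obtain ⟨F2', rfl⟩ : ∃ F', F2 = F' + 1 := ⟨F2 - 1, by omega⟩
          simp only [qMuAux, hσ, if_false, neg_inj]
          apply Finset.sum_congr rfl
          intro w hw
          simp only [Finset.mem_filter] at hw
          obtain ⟨_, hw1, hw2, hw3⟩ := hw
          have hwlen := hw2.len_lt hw3
          exact ih w (by omega) F1' F2' σ (by omega) (by omega)
  intro z F1 F2 σ h1 h2
  exact main z.1 z (le_refl _) F1 F2 σ h1 h2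

lemma qMu_self (σ : QPerm) : qMu σ σ = 1 := by
  unfold qMu
  cases h : σ.1 with
  | zero => simp [qMuAux]
  | succ m => simp [qMuAux]

lemma qMu_rec (σ τ : QPerm) (hne : σ ≠ τ) (hτ : 1 ≤ τ.1) :
    qMu σ τ = -∑ z ∈ (permsUpTo τ.1).filter (fun z => QLe σ z ∧ QLe z τ ∧ z ≠ τ), qMu σ z := by
  unfold qMu
  obtain ⟨m, hm⟩ : ∃ m, τ.1 = m + 1 := ⟨τ.1 - 1, by omega⟩
  rw [hm]
  simp only [qMuAux, hne, if_false, neg_inj]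
  rw [← hm]
  apply Finset.sum_congr rfl
  intro w hw
  simp only [Finset.mem_filter] at hw
  obtain ⟨_, hw1, hw2, hw3⟩ := hw
  have hwlen := hw2.len_lt hw3
  exact qMuAux_congr w m w.1 σ (by omega) (le_refl _)

end Occ
section Grid

variable {n : ℕ}

/-- extend a permutation of `Fin n` to an injective function `ℕ → ℕ` -/
def tv (τp : Equiv.Perm (Fin n)) : ℕ → ℕ :=
  fun x => if h : x < n then (τp ⟨x, h⟩ : ℕ) else x + n

lemma tv_inj (τp : Equiv.Perm (Fin n)) : Function.Injective (tv τp) := by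
  intro x y hxy
  unfold tv at hxy
  split_ifs at hxy with h1 h2 h2
  · have := τp.injective (Fin.ext hxy)
    exact congrArg Fin.val this
  · have := (τp ⟨x, h1⟩).2; omega
  · have := (τp ⟨y, h2⟩).2; omega
  · omega

lemma tv_lt_iff (τp : Equiv.Perm (Fin n)) {x y : ℕ} (hx : x < n) (hy : y < n) :
    tv τp x < tv τp y ↔ τp ⟨x, hx⟩ < τp ⟨y, hy⟩ := by
  unfold tv
  rw [dif_pos hx, dif_pos hy, Fin.lt_def]

/-- the position map: 0 at index 0, `s + i` at index `i ≥ 1` (as naturals) -/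
def gp (s : ℕ) : ℕ → ℕ := fun i => if i = 0 then 0 else s + i

lemma gp_inj (s : ℕ) : Function.Injective (gp s) := by
  intro x y hxy
  unfold gp at hxy
  split_ifs at hxy <;> omega

lemma gp_lt_n {s m : ℕ} (h : s + m ≤ n) (i : Fin m) : gp s (i : ℕ) < n := by
  have h2 := i.2
  simp only [gp]
  split_ifs <;> omega

lemma gQv_inj (τp : Equiv.Perm (Fin n)) (s m : ℕ) :
    Function.Injective (fun i : Fin m => tv τp (gp s (i : ℕ))) := by
  intro x y hxy
  exact Fin.ext (gp_inj s (tv_inj τp hxy))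

/-- the grid element: the pattern of `τp` on positions `{0} ∪ [s+1, s+m-1]` -/
noncomputable def gQ (τp : Equiv.Perm (Fin n)) (s m : ℕ) : QPerm :=
  ⟨m, std (fun i : Fin m => tv τp (gp s (i : ℕ))) (gQv_inj τp s m)⟩

@[simp] lemma gQ_fst (τp : Equiv.Perm (Fin n)) (s m : ℕ) : (gQ τp s m).1 = m := rfl

lemma gQ_lt_iff (τp : Equiv.Perm (Fin n)) (s m : ℕ) {i j : Fin m} :
    (gQ τp s m).2 i < (gQ τp s m).2 j ↔ tv τp (gp s (i : ℕ)) < tv τp (gp s (j : ℕ)) :=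
  std_lt_iff (gQv_inj τp s m)

/-- a permutation whose comparisons match `τp` on grid positions is the grid element -/
lemma eq_gQ (τp : Equiv.Perm (Fin n)) (s m : ℕ) (r : Equiv.Perm (Fin m))
    (h : ∀ i j : Fin m, r i < r j ↔ tv τp (gp s (i : ℕ)) < tv τp (gp s (j : ℕ))) :
    (⟨m, r⟩ : QPerm) = gQ τp s m := by
  unfold gQ
  exact congrArg (Sigma.mk m) (eq_std r _ (gQv_inj τp s m) h)

/-- the delete-second-entry occurrence map -/
def dsMap (m : ℕ) : Fin m → Fin (m + 1) :=
  fun i => ⟨if (i : ℕ) = 0 then 0 else (i : ℕ) + 1, by have := i.2; split_ifs <;> omega⟩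

lemma dsMap_val (m : ℕ) (i : Fin m) :
    (dsMap m i : ℕ) = if (i : ℕ) = 0 then 0 else (i : ℕ) + 1 := rfl

lemma dsMap_strictMono (m : ℕ) : StrictMono (dsMap m) := by
  intro a b hab
  rw [Fin.lt_def] at hab ⊢
  rw [dsMap_val, dsMap_val]
  split_ifs <;> omega

lemma gp_dsMap (s : ℕ) (m : ℕ) (i : Fin m) : gp s (dsMap m i : ℕ) = gp (s + 1) (i : ℕ) := by
  rw [dsMap_val]
  by_cases h : (i : ℕ) = 0 <;> simp [gp, h] <;> omega

/-- delete-second cover: `gQ τp (s+1) m ⋖ gQ τp s (m+1)` -/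
lemma cover_ds (τp : Equiv.Perm (Fin n)) (s m : ℕ) :
    QCov (gQ τp (s + 1) m) (gQ τp s (m + 1)) := by
  refine ⟨rfl, dsMap m, dsMap_strictMono m, ?_, ?_⟩
  · intro i j
    erw [gQ_lt_iff, gQ_lt_iff, gp_dsMap, gp_dsMap]
  · intro i hi ha
    have hi0 : i ≠ 0 := by
      intro h; subst h; simp [qa] at ha
    simp only [gQ_fst] at hi
    show (dsMap m ⟨i + 1, hi⟩ : ℕ) = (dsMap m ⟨i, Nat.lt_of_succ_lt hi⟩ : ℕ) + 1
    have e1 : (dsMap m ⟨i + 1, hi⟩ : ℕ) = if i + 1 = 0 then 0 else i + 2 := rfl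
    have e2 : (dsMap m ⟨i, Nat.lt_of_succ_lt hi⟩ : ℕ) = if i = 0 then 0 else i + 1 := rfl
    rw [e1, e2, if_neg (by omega), if_neg hi0]

/-- delete-last cover: `gQ τp s m ⋖ gQ τp s (m+1)` -/
lemma cover_dl (τp : Equiv.Perm (Fin n)) (s m : ℕ) :
    QCov (gQ τp s m) (gQ τp s (m + 1)) := by
  refine ⟨rfl, Fin.castSucc, fun a b hab => Fin.castSucc_lt_castSucc_iff.2 hab, ?_, ?_⟩
  · intro i j
    erw [gQ_lt_iff, gQ_lt_iff]
    rfl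
  · intro i hi _
    rfl

/-- going up in the grid -/
lemma grid_le (τp : Equiv.Perm (Fin n)) :
    ∀ (d s m s' m' : ℕ), s - s' + (s' + m' - (s + m)) ≤ d → s' ≤ s → s + m ≤ s' + m' →
    QLe (gQ τp s m) (gQ τp s' m') := by
  intro d
  induction d with
  | zero =>
    intro s m s' m' hd h1 h2
    have h : s = s' ∧ m = m' := by omega
    rw [h.1, h.2]
    exact Relation.ReflTransGen.refl
  | succ d ih =>
    intro s m s' m' hd h1 h2
    by_cases hs : s' < s
    · obtain ⟨s₀, rfl⟩ : ∃ s₀, s = s₀ + 1 := ⟨s - 1, by omega⟩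
      exact Relation.ReflTransGen.head (cover_ds τp s₀ m)
        (ih s₀ (m + 1) s' m' (by omega) (by omega) (by omega))
    · by_cases hm : s + m < s' + m'
      · have hs' : s = s' := by omega
        subst hs'
        exact Relation.ReflTransGen.head (cover_dl τp s m)
          (ih s (m + 1) s m' (by omega) (by omega) (by omega))
      · have h : s = s' ∧ m = m' := by omega
        rw [h.1, h.2]
        exact Relation.ReflTransGen.refl

lemma grid_le' (τp : Equiv.Perm (Fin n)) (s m s' m' : ℕ) (h1 : s' ≤ s) (h2 : s + m ≤ s' + m') :
    QLe (gQ τp s m) (gQ τp s' m') :=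
  grid_le τp _ s m s' m' (le_refl _) h1 h2

/-- the canonical occurrence of a grid element in `τ` -/
lemma occ_grid_in_tau (τp : Equiv.Perm (Fin n)) (s m : ℕ) (h : s + m ≤ n) :
    IsOcc qa (gQ τp s m).2 τp (fun i => ⟨gp s (i : ℕ), gp_lt_n h i⟩) := by
  refine ⟨?_, ?_, ?_⟩
  · intro a b hab
    rw [Fin.lt_def] at hab ⊢
    simp only [gp]
    split_ifs <;> omega
  · intro i j
    erw [gQ_lt_iff]
    rw [tv_lt_iff τp (gp_lt_n h i) (gp_lt_n h j)]
  · intro i hi ha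
    have hi0 : i ≠ 0 := by
      intro h'; subst h'; simp [qa] at ha
    simp only [gp]
    rw [if_neg (by omega), if_neg (by omega)]
    omega

end Grid
section MainCtx

lemma occ_consec {k n : ℕ} {σ : Equiv.Perm (Fin k)} {τ : Equiv.Perm (Fin n)}
    {g : Fin k → Fin n} (hg : IsOcc qa σ τ g) :
    ∀ (j : ℕ) (h1 : 1 ≤ j) (hj : j < k) (h1k : 1 < k),
      (g ⟨j, hj⟩ : ℕ) = (g ⟨1, h1k⟩ : ℕ) + (j - 1) := by
  intro j
  induction j with
  | zero => omega
  | succ j ih =>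
    intro h1 hj h1k
    by_cases hj1 : j = 0
    · subst hj1
      simp
    · have hadj := hg.2.2 j hj (qa_succ_false (by omega))
      have := ih (by omega) (Nat.lt_of_succ_lt hj) h1k
      omega

variable {k n p q : ℕ} {σp : Equiv.Perm (Fin k)} {τp : Equiv.Perm (Fin n)} {f : Fin k → Fin n}

/-- τ as a grid element -/
lemma tau_eq_grid (τp : Equiv.Perm (Fin n)) : (⟨n, τp⟩ : QPerm) = gQ τp 0 n := by
  apply eq_gQ
  intro i j
  have hgi : gp 0 (i : ℕ) = (i : ℕ) := by simp [gp]; omega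
  have hgj : gp 0 (j : ℕ) = (j : ℕ) := by simp [gp]; omega
  rw [hgi, hgj, tv_lt_iff τp i.2 j.2]

/-- gp at the canonical σ-occurrence positions equals f -/
lemma gp_f (hfv : ∀ (i : ℕ) (hi : i < k), (f ⟨i, hi⟩ : ℕ) = if i = 0 then 0 else p + i)
    (i : Fin k) : gp p (i : ℕ) = (f i : ℕ) := by
  have := hfv i.1 i.2
  simp only [Fin.eta] at this
  rw [this]
  simp [gp]

/-- σ as a grid element -/
lemma sigma_eq_grid (hn : n = p + k + q) (hf : IsOcc qa σp τp f)
    (hfv : ∀ (i : ℕ) (hi : i < k), (f ⟨i, hi⟩ : ℕ) = if i = 0 then 0 else p + i) :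
    (⟨k, σp⟩ : QPerm) = gQ τp p k := by
  apply eq_gQ
  intro i j
  rw [gp_f hfv i, gp_f hfv j, tv_lt_iff τp (f i).2 (f j).2]
  simp only [Fin.eta]
  exact hf.2.1 i j

/-- occurrence map of σ into a grid element -/
def sMap (w : ℕ) {k m : ℕ} (h : w + k ≤ m) : Fin k → Fin m :=
  fun i => ⟨if (i : ℕ) = 0 then 0 else w + (i : ℕ), by have := i.2; split_ifs <;> omega⟩

lemma sMap_val (w : ℕ) {k m : ℕ} (h : w + k ≤ m) (i : Fin k) :
    (sMap w h i : ℕ) = if (i : ℕ) = 0 then 0 else w + (i : ℕ) := rfl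

lemma sMap_strictMono (w : ℕ) {k m : ℕ} (h : w + k ≤ m) : StrictMono (sMap w h) := by
  intro a b hab
  rw [Fin.lt_def] at hab ⊢
  rw [sMap_val, sMap_val]
  split_ifs <;> omega

/-- the canonical occurrence of σ in a grid element -/
lemma occ_sigma_in_grid (hf : IsOcc qa σp τp f)
    (hfv : ∀ (i : ℕ) (hi : i < k), (f ⟨i, hi⟩ : ℕ) = if i = 0 then 0 else p + i)
    (s m : ℕ) (hs : s ≤ p) (hw : p - s + k ≤ m) :
    IsOcc qa σp (gQ τp s m).2 (sMap (p - s) hw) := by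
  have hgp : ∀ i : Fin k, gp s (sMap (p - s) hw i : ℕ) = gp p (i : ℕ) := by
    intro i
    rw [sMap_val]
    by_cases h : (i : ℕ) = 0 <;> simp [gp, h] <;> omega
  refine ⟨sMap_strictMono _ _, ?_, ?_⟩
  · intro i j
    erw [gQ_lt_iff, hgp i, hgp j, gp_f hfv i, gp_f hfv j, tv_lt_iff τp (f i).2 (f j).2]
    simp only [Fin.eta]
    exact hf.2.1 i j
  · intro i hi ha
    have hi0 : i ≠ 0 := by intro h'; subst h'; simp [qa] at ha
    have e1 : (sMap (p - s) hw ⟨i + 1, hi⟩ : ℕ) = if i + 1 = 0 then 0 else p - s + (i + 1) := rfl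
    have e2 : (sMap (p - s) hw ⟨i, Nat.lt_of_succ_lt hi⟩ : ℕ) = if i = 0 then 0 else p - s + i := rfl
    erw [e1, e2, if_neg (by omega), if_neg hi0]
    omega

end MainCtx
section MainCtx2

variable {k n p q : ℕ} {σp : Equiv.Perm (Fin k)} {τp : Equiv.Perm (Fin n)} {f : Fin k → Fin n}

lemma grid_le_rev (hk : 2 ≤ k) (hf : IsOcc qa σp τp f)
    (hfv : ∀ (i : ℕ) (hi : i < k), (f ⟨i, hi⟩ : ℕ) = if i = 0 then 0 else p + i)
    (huniq : ∀ g : Fin k → Fin n, IsOcc qa σp τp g → g = f)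
    (s m s' m' : ℕ) (hs : s ≤ p) (hkm : p + k ≤ s + m) (hs'n : s' + m' ≤ n)
    (hle : QLe (gQ τp s m) (gQ τp s' m')) : s' ≤ s ∧ s + m ≤ s' + m' := by
  obtain ⟨g, hg⟩ := hle.exists_occ
  have hw : p - s + k ≤ m := by omega
  have hm2 : 2 ≤ m := by omega
  have hsig := occ_sigma_in_grid hf hfv s m hs hw
  have hcomp := isOcc_comp hsig hg
  have htot := isOcc_comp hcomp (occ_grid_in_tau τp s' m' hs'n)
  have heq := huniq _ htot
  -- value of the composed map at index 1
  have h1k : (1 : ℕ) < k := by omega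
  have hv1 := congrArg Fin.val (congrFun heq ⟨1, h1k⟩)
  simp only [] at hv1
  -- hv1 : gp s' ↑(g (sMap (p-s) hw ⟨1,h1k⟩)) = ↑(f ⟨1,h1k⟩)
  have hf1 : (f ⟨1, h1k⟩ : ℕ) = p + 1 := by rw [hfv 1 h1k]; norm_num
  have hsv : (sMap (p - s) hw ⟨1, h1k⟩ : ℕ) = p - s + 1 := by
    rw [sMap_val]; norm_num
  have hgm : (gQ τp s m).fst = m := rfl
  have hpm : p - s + 1 < (gQ τp s m).fst := by rw [hgm]; omega
  have h1m : (1 : ℕ) < (gQ τp s m).fst := by rw [hgm]; omega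
  have hmm : m - 1 < (gQ τp s m).fst := by rw [hgm]; omega
  have haeq : sMap (p - s) hw ⟨1, h1k⟩ = ⟨p - s + 1, hpm⟩ := Fin.ext hsv
  erw [haeq] at hv1
  have hgc1 : (g ⟨p - s + 1, hpm⟩ : ℕ) = (g ⟨1, h1m⟩ : ℕ) + (p - s + 1 - 1) :=
    occ_consec hg (p - s + 1) (by omega) hpm h1m
  have hg1ge : 1 ≤ (g ⟨1, h1m⟩ : ℕ) := strictMono_fin_le hg.1 ⟨1, h1m⟩
  have hgpe : gp s' ((g ⟨p - s + 1, hpm⟩ : ℕ)) = s' + (g ⟨p - s + 1, hpm⟩ : ℕ) := by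
    simp only [gp]
    rw [if_neg (by omega)]
  erw [hgpe, hf1] at hv1
  have hs's : s' ≤ s := by omega
  -- value at index m - 1
  have hgcm : (g ⟨m - 1, hmm⟩ : ℕ) = (g ⟨1, h1m⟩ : ℕ) + (m - 1 - 1) :=
    occ_consec hg (m - 1) (by omega) hmm h1m
  have hbnd : (g ⟨m - 1, hmm⟩ : ℕ) < m' := (g ⟨m - 1, hmm⟩).2
  exact ⟨hs's, by omega⟩

end MainCtx2
section MainCtx3

lemma g_classify {m n' : ℕ} {σ : Equiv.Perm (Fin m)} {τ : Equiv.Perm (Fin n')}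
    {g : Fin m → Fin n'} (hm : 2 ≤ m) (hn' : n' = m + 1) (hg : IsOcc qa σ τ g) :
    (∀ i : Fin m, (g i : ℕ) = i) ∨ (∀ i : Fin m, (g i : ℕ) = if (i : ℕ) = 0 then 0 else (i : ℕ) + 1)
      ∨ (∀ i : Fin m, (g i : ℕ) = (i : ℕ) + 1) := by
  have h1m : 1 < m := by omega
  have h0m : 0 < m := by omega
  have hm1m : m - 1 < m := by omega
  set g1 := (g ⟨1, h1m⟩ : ℕ) with hg1
  have hglast : (g ⟨m - 1, hm1m⟩ : ℕ) = g1 + (m - 1 - 1) :=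
    occ_consec hg (m - 1) (by omega) hm1m h1m
  have hbnd : (g ⟨m - 1, hm1m⟩ : ℕ) < n' := (g ⟨m - 1, hm1m⟩).2
  have hg0 : (g ⟨0, h0m⟩ : ℕ) < g1 := by
    have h := hg.1 (show (⟨0, h0m⟩ : Fin m) < ⟨1, h1m⟩ by rw [Fin.lt_def]; norm_num)
    rw [Fin.lt_def] at h
    exact h
  have hgen : ∀ i : Fin m, 1 ≤ (i : ℕ) → (g i : ℕ) = g1 + ((i : ℕ) - 1) := by
    intro i hi
    have h := occ_consec hg (i : ℕ) hi i.2 h1m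
    simpa [Fin.eta] using h
  have hg1le : g1 ≤ 2 := by omega
  have hg1ge : 1 ≤ g1 := by omega
  have hzero : ∀ i : Fin m, (i : ℕ) = 0 → (g i : ℕ) = (g ⟨0, h0m⟩ : ℕ) := by
    intro i hi0
    rw [congrArg g (Fin.ext (a := i) (b := ⟨0, h0m⟩) hi0)]
  by_cases h1 : g1 = 1
  · left
    intro i
    by_cases hi0 : (i : ℕ) = 0
    · rw [hzero i hi0, hi0]; omega
    · rw [hgen i (by omega)]; omega
  · have h2 : g1 = 2 := by omega
    by_cases h0 : (g ⟨0, h0m⟩ : ℕ) = 0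
    · right; left
      intro i
      by_cases hi0 : (i : ℕ) = 0
      · rw [hzero i hi0, if_pos hi0]; omega
      · rw [hgen i (by omega), if_neg hi0]; omega
    · right; right
      intro i
      by_cases hi0 : (i : ℕ) = 0
      · rw [hzero i hi0, hi0]; omega
      · rw [hgen i (by omega)]; omega

variable {k n p q : ℕ} {σp : Equiv.Perm (Fin k)} {τp : Equiv.Perm (Fin n)} {f : Fin k → Fin n}

lemma cover_step (hk : 2 ≤ k) (hp : 1 ≤ p) (hf : IsOcc qa σp τp f)
    (hfv : ∀ (i : ℕ) (hi : i < k), (f ⟨i, hi⟩ : ℕ) = if i = 0 then 0 else p + i)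
    (huniq : ∀ g : Fin k → Fin n, IsOcc qa σp τp g → g = f)
    (s m : ℕ) (hs : s ≤ p) (hkm : p + k ≤ s + m + 1) (hsm : s + m + 1 ≤ n)
    (ρ : QPerm) (hcov : QCov ρ (gQ τp s (m + 1))) (hσρ : QLe ⟨k, σp⟩ ρ) :
    (s + 1 ≤ p ∧ p + k ≤ s + 1 + m ∧ ρ = gQ τp (s + 1) m) ∨
      (p + k ≤ s + m ∧ ρ = gQ τp s m) := by
  obtain ⟨hlen, g, hg⟩ := hcov
  obtain ⟨mρ, rp⟩ := ρ
  simp only [gQ_fst] at hlen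
  have hmm : m = mρ := by omega
  subst hmm
  have hmk : k ≤ m := hσρ.len_le
  have hm2 : 2 ≤ m := by omega
  have key : ∀ s'' : ℕ, (∀ i : Fin m, gp s ((g i : ℕ)) = gp s'' (i : ℕ)) →
      (⟨m, rp⟩ : QPerm) = gQ τp s'' m := by
    intro s'' hgp
    apply eq_gQ
    intro i j
    have base := (hg.2.1 i j).trans (gQ_lt_iff τp s (m + 1))
    rw [hgp i, hgp j] at base
    exact base
  rcases g_classify hm2 rfl hg with hc | hc | hc
  · -- delete last entry
    have hρ : (⟨m, rp⟩ : QPerm) = gQ τp s m := key s (fun i => by rw [hc i])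
    by_cases hbd : p + k ≤ s + m
    · exact Or.inr ⟨hbd, hρ⟩
    · exfalso
      rw [hρ] at hσρ
      obtain ⟨h, hh⟩ := hσρ.exists_occ
      have htot := isOcc_comp hh (occ_grid_in_tau τp s m (by omega))
      have heq := huniq _ htot
      have hkm1 : k - 1 < k := by omega
      have hv := congrArg Fin.val (congrFun heq ⟨k - 1, hkm1⟩)
      simp only [] at hv
      rw [hfv (k - 1) hkm1] at hv
      have hb : (h ⟨k - 1, hkm1⟩ : ℕ) < m := (h ⟨k - 1, hkm1⟩).2
      simp only [gp] at hv
      split_ifs at hv <;> omega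
  · -- delete second entry
    have hρ : (⟨m, rp⟩ : QPerm) = gQ τp (s + 1) m := key (s + 1) (fun i => by
      rw [hc i]
      by_cases h0 : (i : ℕ) = 0 <;> simp [gp, h0] <;> omega)
    by_cases hsp : s + 1 ≤ p
    · exact Or.inl ⟨hsp, by omega, hρ⟩
    · exfalso
      have hsep : s = p := by omega
      rw [hρ] at hσρ
      obtain ⟨h, hh⟩ := hσρ.exists_occ
      have htot := isOcc_comp hh (occ_grid_in_tau τp (s + 1) m (by omega))
      have heq := huniq _ htot
      have h1k : (1 : ℕ) < k := by omega
      have hv := congrArg Fin.val (congrFun heq ⟨1, h1k⟩)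
      simp only [] at hv
      rw [hfv 1 h1k] at hv
      have hb1 : 1 ≤ (h ⟨1, h1k⟩ : ℕ) := strictMono_fin_le hh.1 ⟨1, h1k⟩
      simp only [gp] at hv
      split_ifs at hv <;> omega
  · -- delete first entry: impossible
    exfalso
    have hocc : IsOcc qa rp τp (fun i : Fin m => ⟨s + ((i : ℕ) + 1), by have := i.2; omega⟩) := by
      refine ⟨?_, ?_, ?_⟩
      · intro a b hab
        rw [Fin.lt_def] at hab ⊢
        show s + ((a : ℕ) + 1) < s + ((b : ℕ) + 1)
        omega
      · intro i j
        have base := (hg.2.1 i j).trans (gQ_lt_iff τp s (m + 1))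
        have e : ∀ i' : Fin m, gp s ((g i' : ℕ)) = s + ((i' : ℕ) + 1) := by
          intro i'
          rw [hc i']
          simp [gp]
        rw [e i, e j] at base
        refine base.trans ?_
        exact tv_lt_iff τp _ _
      · intro i hi _
        show s + (i + 1 + 1) = s + (i + 1) + 1
        omega
    obtain ⟨h, hh⟩ := hσρ.exists_occ
    have htot := isOcc_comp hh hocc
    have heq := huniq _ htot
    have h0k : (0 : ℕ) < k := by omega
    have hv := congrArg Fin.val (congrFun heq ⟨0, h0k⟩)
    simp only [] at hv
    rw [hfv 0 h0k] at hv
    norm_num at hv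

end MainCtx3
section MainCtx4

variable {k n p q : ℕ} {σp : Equiv.Perm (Fin k)} {τp : Equiv.Perm (Fin n)} {f : Fin k → Fin n}

lemma interval_char (hk : 2 ≤ k) (hp : 1 ≤ p) (hn : n = p + k + q)
    (hf : IsOcc qa σp τp f)
    (hfv : ∀ (i : ℕ) (hi : i < k), (f ⟨i, hi⟩ : ℕ) = if i = 0 then 0 else p + i)
    (huniq : ∀ g : Fin k → Fin n, IsOcc qa σp τp g → g = f) :
    ∀ ρ : QPerm, QLe ρ (gQ τp 0 n) → QLe ⟨k, σp⟩ ρ →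
      ∃ s m, s ≤ p ∧ p + k ≤ s + m ∧ s + m ≤ n ∧ ρ = gQ τp s m := by
  intro ρ hρτ
  induction hρτ using Relation.ReflTransGen.head_induction_on with
  | refl =>
    intro _
    exact ⟨0, n, by omega, by omega, by omega, rfl⟩
  | head hcov hle ih =>
    intro hσρ
    rename_i a c
    have hσc : QLe ⟨k, σp⟩ c := hσρ.trans (Relation.ReflTransGen.single hcov)
    obtain ⟨s, m', hs, hkm, hsm, hceq⟩ := ih hσc
    obtain ⟨m, rfl⟩ : ∃ m, m' = m + 1 := ⟨m' - 1, by omega⟩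
    rw [hceq] at hcov
    rcases cover_step hk hp hf hfv huniq s m hs (by omega) (by omega) a hcov hσρ with
      ⟨h1, h2, h3⟩ | ⟨h1, h2⟩
    · exact ⟨s + 1, m, h1, h2, by omega, h3⟩
    · exact ⟨s, m, hs, h1, by omega, h2⟩

end MainCtx4
section MainCtx5

variable {k n p q : ℕ} {σp : Equiv.Perm (Fin k)} {τp : Equiv.Perm (Fin n)} {f : Fin k → Fin n}

lemma gQ_pair_inj (hk : 2 ≤ k) (hf : IsOcc qa σp τp f)
    (hfv : ∀ (i : ℕ) (hi : i < k), (f ⟨i, hi⟩ : ℕ) = if i = 0 then 0 else p + i)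
    (huniq : ∀ g : Fin k → Fin n, IsOcc qa σp τp g → g = f)
    (a b c d : ℕ) (h1 : a ≤ p) (h2 : p + k ≤ b) (h3 : b ≤ n)
    (h4 : c ≤ p) (h5 : p + k ≤ d) (h6 : d ≤ n)
    (heq : gQ τp a (b - a) = gQ τp c (d - c)) : a = c ∧ b = d := by
  have hle1 : QLe (gQ τp a (b - a)) (gQ τp c (d - c)) := heq ▸ Relation.ReflTransGen.refl
  have hle2 : QLe (gQ τp c (d - c)) (gQ τp a (b - a)) := heq ▸ Relation.ReflTransGen.refl
  have r1 := grid_le_rev hk hf hfv huniq a (b - a) c (d - c) h1 (by omega) (by omega) hle1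
  have r2 := grid_le_rev hk hf hfv huniq c (d - c) a (b - a) h4 (by omega) (by omega) hle2
  omega

lemma mu_grid (hk : 2 ≤ k) (hp : 1 ≤ p) (hn : n = p + k + q)
    (hf : IsOcc qa σp τp f)
    (hfv : ∀ (i : ℕ) (hi : i < k), (f ⟨i, hi⟩ : ℕ) = if i = 0 then 0 else p + i)
    (huniq : ∀ g : Fin k → Fin n, IsOcc qa σp τp g → g = f) :
    ∀ m s : ℕ, s ≤ p → p + k ≤ s + m → s + m ≤ n →
      qMu ⟨k, σp⟩ (gQ τp s m) =
        ((if s = p then (1 : ℤ) else 0) - (if s + 1 = p then 1 else 0)) *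
        ((if s + m = p + k then (1 : ℤ) else 0) - (if s + m = p + k + 1 then 1 else 0)) := by
  intro m
  induction m using Nat.strong_induction_on with
  | _ m ih =>
  intro s hs hkm hsm
  have heqσ : (⟨k, σp⟩ : QPerm) = gQ τp p k := sigma_eq_grid hn hf hfv
  by_cases hbase : s = p ∧ s + m = p + k
  · obtain ⟨h1, h2⟩ := hbase
    subst h1
    have hmk : m = k := by omega
    subst hmk
    rw [← heqσ, qMu_self]
    split_ifs <;> omega
  · -- recursive case
    have hne : (⟨k, σp⟩ : QPerm) ≠ gQ τp s m := by
      intro hcontra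
      rw [heqσ] at hcontra
      have hpk : p + (p + k - p) = p + k := by omega
      have : gQ τp p (p + k - p) = gQ τp s (s + m - s) := by
        have e1 : p + k - p = k := by omega
        have e2 : s + m - s = m := by omega
        rw [e1, e2]; exact hcontra
      have := gQ_pair_inj hk hf hfv huniq p (p + k) s (s + m) (le_refl p) (le_refl _)
        (by omega) hs hkm hsm this
      omega
    have hrec := qMu_rec ⟨k, σp⟩ (gQ τp s m) hne (by simp only [gQ_fst]; omega)
    -- identify the summation set
    set T : Finset (ℕ × ℕ) :=
      ((Finset.Icc s p) ×ˢ (Finset.Icc (p + k) (s + m))).erase (s, s + m) with hT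
    have hset : (permsUpTo (gQ τp s m).1).filter
        (fun z => QLe ⟨k, σp⟩ z ∧ QLe z (gQ τp s m) ∧ z ≠ gQ τp s m) =
        T.image (fun st => gQ τp st.1 (st.2 - st.1)) := by
      ext z
      simp only [Finset.mem_filter, Finset.mem_image, hT, Finset.mem_erase,
        Finset.mem_product, Finset.mem_Icc]
      constructor
      · rintro ⟨hmem, hσz, hzτ, hzne⟩
        have hzgrid : QLe z (gQ τp 0 n) :=
          hzτ.trans (grid_le' τp s m 0 n (by omega) (by omega))
        obtain ⟨a, m'', ha, hakm, hamn, hzeq⟩ :=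
          interval_char hk hp hn hf hfv huniq z hzgrid hσz
        have hrel : s ≤ a ∧ a + m'' ≤ s + m := by
          apply grid_le_rev hk hf hfv huniq a m'' s m ha hakm (by omega)
          rw [← hzeq]; exact hzτ
        refine ⟨(a, a + m''), ⟨?_, ⟨by omega, by omega⟩, by omega⟩, ?_⟩
        · intro hpair
          apply hzne
          have h1 : a = s := by
            have := congrArg Prod.fst hpair
            simpa using this
          have h2 : a + m'' = s + m := by
            have := congrArg Prod.snd hpair
            simpa using this
          rw [hzeq, h1]
          have : m'' = m := by omega
          rw [this]
        · simp only []
          have e : a + m'' - a = m'' := by omega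
          rw [e, ← hzeq]
      · rintro ⟨⟨a, b⟩, ⟨hab, ⟨h1, h2⟩, h3⟩, hzeq⟩
        simp only [] at hzeq
        subst hzeq
        refine ⟨?_, ?_, ?_, ?_⟩
        · -- membership in permsUpTo
          rw [permsUpTo, Finset.mem_sigma]
          exact ⟨Finset.mem_range.2 (by simp only [gQ_fst]; omega), Finset.mem_univ _⟩
        · rw [heqσ]
          exact grid_le' τp p k a (b - a) (by omega) (by omega)
        · exact grid_le' τp a (b - a) s m (by omega) (by omega)
        · intro hcontra
          have : gQ τp a (b - a) = gQ τp s (s + m - s) := by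
            have e : s + m - s = m := by omega
            rw [e]; exact hcontra
          have := gQ_pair_inj hk hf hfv huniq a b s (s + m) (by omega) (by omega)
            (by omega) hs hkm hsm this
          exact hab (by rw [Prod.mk.injEq]; omega)
    rw [hset] at hrec
    -- injectivity on T for sum_image
    have hinj : ∀ x ∈ T, ∀ y ∈ T, (fun st : ℕ × ℕ => gQ τp st.1 (st.2 - st.1)) x =
        (fun st => gQ τp st.1 (st.2 - st.1)) y → x = y := by
      rintro ⟨a, b⟩ hx ⟨c, d⟩ hy hxy
      simp only [hT, Finset.mem_erase, Finset.mem_product, Finset.mem_Icc] at hx hy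
      simp only [] at hxy
      have := gQ_pair_inj hk hf hfv huniq a b c d (by omega) (by omega) (by omega)
        (by omega) (by omega) (by omega) hxy
      rw [Prod.mk.injEq]; omega
    rw [Finset.sum_image hinj] at hrec
    -- rewrite each term with the inductive hypothesis
    have hterm : ∀ st ∈ T, qMu ⟨k, σp⟩ (gQ τp st.1 (st.2 - st.1)) =
        ((if st.1 = p then (1 : ℤ) else 0) - (if st.1 + 1 = p then 1 else 0)) *
        ((if st.2 = p + k then (1 : ℤ) else 0) - (if st.2 = p + k + 1 then 1 else 0)) := by
      rintro ⟨a, b⟩ hab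
      simp only [hT, Finset.mem_erase, Finset.mem_product, Finset.mem_Icc] at hab
      simp only []
      have hlt : b - a < m := by
        rcases hab with ⟨hne2, ⟨ha1, ha2⟩, hb1, hb2⟩
        have hcase : a ≠ s ∨ b ≠ s + m := by
          by_contra hcon
          push_neg at hcon
          exact hne2 (by rw [hcon.1, hcon.2])
        omega
      have := ih (b - a) hlt a (by omega) (by omega) (by omega)
      rw [this]
      have e : a + (b - a) = b := by omega
      rw [e]
    rw [Finset.sum_congr rfl hterm] at hrec
    -- compute the double sum
    have hsum : ∑ st ∈ T, (((if st.1 = p then (1 : ℤ) else 0) - (if st.1 + 1 = p then 1 else 0)) *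
        ((if st.2 = p + k then (1 : ℤ) else 0) - (if st.2 = p + k + 1 then 1 else 0))) =
        (∑ a ∈ Finset.Icc s p, ((if a = p then (1 : ℤ) else 0) - (if a + 1 = p then 1 else 0))) *
        (∑ b ∈ Finset.Icc (p + k) (s + m),
          ((if b = p + k then (1 : ℤ) else 0) - (if b = p + k + 1 then 1 else 0))) -
        ((if s = p then (1 : ℤ) else 0) - (if s + 1 = p then 1 else 0)) *
        ((if s + m = p + k then (1 : ℤ) else 0) - (if s + m = p + k + 1 then 1 else 0)) := by
      rw [hT, Finset.sum_erase_eq_sub (by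
        rw [Finset.mem_product]
        exact ⟨Finset.mem_Icc.2 ⟨le_refl s, hs⟩, Finset.mem_Icc.2 ⟨hkm, le_refl _⟩⟩)]
      congr 1
      rw [Finset.sum_product' (f := fun a b =>
        ((if a = p then (1 : ℤ) else 0) - (if a + 1 = p then 1 else 0)) *
        ((if b = p + k then (1 : ℤ) else 0) - (if b = p + k + 1 then 1 else 0)))]
      simp only [← Finset.mul_sum]
      rw [← Finset.sum_mul]
    rw [hsum] at hrec
    -- compute the two single sums
    have hsumG : ∑ a ∈ Finset.Icc s p, ((if a = p then (1 : ℤ) else 0) -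
        (if a + 1 = p then 1 else 0)) = if s = p then 1 else 0 := by
      rw [Finset.sum_sub_distrib]
      rw [Finset.sum_ite_eq' (Finset.Icc s p) p (fun _ => (1 : ℤ))]
      have e : ∀ a ∈ Finset.Icc s p, (if a + 1 = p then (1 : ℤ) else 0) =
          (if a = p - 1 then 1 else 0) := by
        intro a _
        congr 1
        · simp only [eq_iff_iff]
          omega
      rw [Finset.sum_congr rfl e]
      rw [Finset.sum_ite_eq' (Finset.Icc s p) (p - 1) (fun _ => (1 : ℤ))]
      simp only [Finset.mem_Icc]
      split_ifs <;> omega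
    have hsumH : ∑ b ∈ Finset.Icc (p + k) (s + m), ((if b = p + k then (1 : ℤ) else 0) -
        (if b = p + k + 1 then 1 else 0)) = if s + m = p + k then 1 else 0 := by
      rw [Finset.sum_sub_distrib]
      rw [Finset.sum_ite_eq' (Finset.Icc (p + k) (s + m)) (p + k) (fun _ => (1 : ℤ))]
      rw [Finset.sum_ite_eq' (Finset.Icc (p + k) (s + m)) (p + k + 1) (fun _ => (1 : ℤ))]
      simp only [Finset.mem_Icc]
      split_ifs <;> omega
    rw [hsumG, hsumH] at hrec
    rw [hrec]
    have hGH : (if s = p then (1 : ℤ) else 0) * (if s + m = p + k then (1 : ℤ) else 0) = 0 := by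
      split_ifs with u v
      · exact absurd ⟨u, v⟩ hbase
      · ring
      · ring
      · ring
    ring_nf
    ring_nf at hGH ⊢
    omega

end MainCtx5

/-- If `σ` occurs precisely once in `τ = a₁a₂⋯aₙ` and the occurrence
involves `a₁` but neither `a₂` nor `aₙ`, then `[σ, τ]` is a grid (product
of two chains of length at least 1); hence `μ(σ,τ) = 1` if the rank is `2`
and `μ(σ,τ) = 0` otherwise. -/
theorem unique_occurrence_first_entry (σ τ : QPerm) (hle : QLe σ τ)
    (f : Fin σ.1 → Fin τ.1) (hf : IsOcc qa σ.2 τ.2 f)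
    (huniq : ∀ g : Fin σ.1 → Fin τ.1, IsOcc qa σ.2 τ.2 g → g = f)
    (h0 : Involves f 0) (h1 : ¬ Involves f 1) (hn : ¬ Involves f (τ.1 - 1)) :
    (∃ p q : ℕ, 1 ≤ p ∧ 1 ≤ q ∧ IsGridInterval σ τ p q) ∧
      (τ.1 - σ.1 = 2 → qMu σ τ = 1) ∧ (τ.1 - σ.1 ≠ 2 → qMu σ τ = 0) := by
  obtain ⟨k, σp⟩ := σ
  obtain ⟨n, τp⟩ := τ
  have hf2 : IsOcc qa σp τp f := hf
  have huniq2 : ∀ g : Fin k → Fin n, IsOcc qa σp τp g → g = f := huniq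
  have hn2 : ¬ Involves f (n - 1) := hn
  -- basic structure of the unique occurrence
  obtain ⟨j0, hj0⟩ := h0
  have hk1 : 0 < k := lt_of_le_of_lt (Nat.zero_le _) j0.2
  have hn1 : 0 < n := lt_of_le_of_lt (Nat.zero_le _) (f j0).2
  have hf0 : (f ⟨0, hk1⟩ : ℕ) = 0 := by
    have hle0 : f ⟨0, hk1⟩ ≤ f j0 := hf2.1.monotone (by rw [Fin.le_def]; exact Nat.zero_le _)
    rw [Fin.le_def, hj0] at hle0
    omega
  have hk2 : 2 ≤ k := by
    by_contra hcon
    have hocc : IsOcc qa σp τp (fun _ => ⟨n - 1, by omega⟩) := by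
      refine ⟨?_, ?_, ?_⟩
      · intro a b hab
        rw [Fin.lt_def] at hab
        have := a.2; have := b.2
        omega
      · intro i j
        have hij : i = j := Fin.ext (by have := i.2; have := j.2; omega)
        subst hij
        simp
      · intro i hi hqa
        omega
    have hgf := huniq2 _ hocc
    have hvv := congrArg Fin.val (congrFun hgf ⟨0, hk1⟩)
    simp only [] at hvv
    rw [hf0] at hvv
    exact hn2 ⟨j0, by omega⟩
  have h1k : 1 < k := by omega
  have hb1 : 1 ≤ (f ⟨1, h1k⟩ : ℕ) := by
    have hlt := hf2.1 (show (⟨0, hk1⟩ : Fin k) < ⟨1, h1k⟩ by rw [Fin.lt_def]; norm_num)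
    rw [Fin.lt_def, hf0] at hlt
    omega
  have hb2 : 2 ≤ (f ⟨1, h1k⟩ : ℕ) := by
    rcases Nat.lt_or_ge (f ⟨1, h1k⟩ : ℕ) 2 with h | h
    · exact absurd ⟨⟨1, h1k⟩, by omega⟩ h1
    · exact h
  obtain ⟨p, hpb⟩ : ∃ p, (f ⟨1, h1k⟩ : ℕ) = p + 1 := ⟨(f ⟨1, h1k⟩ : ℕ) - 1, by omega⟩
  have hp : 1 ≤ p := by omega
  have hfv : ∀ (i : ℕ) (hi : i < k), (f ⟨i, hi⟩ : ℕ) = if i = 0 then 0 else p + i := by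
    intro i hi
    by_cases hi0 : i = 0
    · subst hi0
      rw [if_pos rfl]
      exact hf0
    · rw [if_neg hi0]
      have := occ_consec hf2 i (by omega) hi h1k
      omega
  have hkm1 : k - 1 < k := by omega
  have hlv : (f ⟨k - 1, hkm1⟩ : ℕ) = p + (k - 1) := by
    rw [hfv (k - 1) hkm1, if_neg (by omega)]
  have hnotlast : (f ⟨k - 1, hkm1⟩ : ℕ) ≠ n - 1 := fun hcon => hn2 ⟨⟨k - 1, hkm1⟩, hcon⟩
  have hlvlt : (f ⟨k - 1, hkm1⟩ : ℕ) < n := (f ⟨k - 1, hkm1⟩).2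
  obtain ⟨q, hnq⟩ : ∃ q, n = p + k + q := ⟨n - (p + k), by omega⟩
  have hq : 1 ≤ q := by omega
  have heqσ : (⟨k, σp⟩ : QPerm) = gQ τp p k := sigma_eq_grid hnq hf2 hfv
  have heqτ : (⟨n, τp⟩ : QPerm) = gQ τp 0 n := tau_eq_grid τp
  -- the interval membership of grid elements
  have hmem : ∀ uv : Fin (p + 1) × Fin (q + 1),
      gQ τp (p - (uv.1 : ℕ)) (k + (uv.1 : ℕ) + (uv.2 : ℕ)) ∈
        QInterval ⟨k, σp⟩ ⟨n, τp⟩ := by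
    intro uv
    have hu := uv.1.2
    have hv := uv.2.2
    constructor
    · rw [heqσ]
      exact grid_le' τp p k _ _ (by omega) (by omega)
    · rw [heqτ]
      exact grid_le' τp _ _ 0 n (by omega) (by omega)
  set F : Fin (p + 1) × Fin (q + 1) → QInterval ⟨k, σp⟩ ⟨n, τp⟩ :=
    fun uv => ⟨gQ τp (p - (uv.1 : ℕ)) (k + (uv.1 : ℕ) + (uv.2 : ℕ)), hmem uv⟩ with hF
  have hbij : Function.Bijective F := by
    constructor
    · rintro ⟨u1, v1⟩ ⟨u2, v2⟩ huv
      have hu1 := u1.2; have hv1 := v1.2; have hu2 := u2.2; have hv2 := v2.2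
      have hval := congrArg Subtype.val huv
      simp only [hF] at hval
      have e1 : k + (u1 : ℕ) + (v1 : ℕ) = (p + k + (v1 : ℕ)) - (p - (u1 : ℕ)) := by omega
      have e2 : k + (u2 : ℕ) + (v2 : ℕ) = (p + k + (v2 : ℕ)) - (p - (u2 : ℕ)) := by omega
      rw [e1, e2] at hval
      have hres := gQ_pair_inj hk2 hf2 hfv huniq2 (p - (u1 : ℕ)) (p + k + (v1 : ℕ))
        (p - (u2 : ℕ)) (p + k + (v2 : ℕ)) (by omega) (by omega) (by omega)
        (by omega) (by omega) (by omega) hval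
      rw [Prod.mk.injEq]
      exact ⟨Fin.ext (by omega), Fin.ext (by omega)⟩
    · rintro ⟨z, hz⟩
      have hzτ : QLe z (gQ τp 0 n) := by rw [← heqτ]; exact hz.2
      obtain ⟨s, m, hs, hkm, hsm, hzeq⟩ :=
        interval_char hk2 hp hnq hf2 hfv huniq2 z hzτ hz.1
      refine ⟨(⟨p - s, by omega⟩, ⟨s + m - (p + k), by omega⟩), ?_⟩
      apply Subtype.ext
      show gQ τp (p - (p - s)) (k + (p - s) + (s + m - (p + k))) = z
      have e1 : p - (p - s) = s := by omega
      have e2 : k + (p - s) + (s + m - (p + k)) = m := by omega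
      rw [e1, e2]
      exact hzeq.symm
  refine ⟨⟨p, q, hp, hq, ⟨(Equiv.ofBijective F hbij).symm, ?_⟩⟩, ?_, ?_⟩
  · -- order isomorphism property
    intro ρ₁ ρ₂
    have h1' : F ((Equiv.ofBijective F hbij).symm ρ₁) = ρ₁ :=
      (Equiv.ofBijective F hbij).apply_symm_apply ρ₁
    have h2' : F ((Equiv.ofBijective F hbij).symm ρ₂) = ρ₂ :=
      (Equiv.ofBijective F hbij).apply_symm_apply ρ₂
    set uv₁ := (Equiv.ofBijective F hbij).symm ρ₁ with huv₁
    set uv₂ := (Equiv.ofBijective F hbij).symm ρ₂ with huv₂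
    have hval₁ : (ρ₁ : QPerm) = gQ τp (p - (uv₁.1 : ℕ)) (k + (uv₁.1 : ℕ) + (uv₁.2 : ℕ)) :=
      (congrArg Subtype.val h1').symm
    have hval₂ : (ρ₂ : QPerm) = gQ τp (p - (uv₂.1 : ℕ)) (k + (uv₂.1 : ℕ) + (uv₂.2 : ℕ)) :=
      (congrArg Subtype.val h2').symm
    have hu1 := uv₁.1.2; have hv1 := uv₁.2.2; have hu2 := uv₂.1.2; have hv2 := uv₂.2.2
    rw [hval₁, hval₂]
    constructor
    · intro hle'
      have hres := grid_le_rev hk2 hf2 hfv huniq2 (p - (uv₁.1 : ℕ)) (k + (uv₁.1 : ℕ) + (uv₁.2 : ℕ))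
        (p - (uv₂.1 : ℕ)) (k + (uv₂.1 : ℕ) + (uv₂.2 : ℕ)) (by omega) (by omega) (by omega) hle'
      rw [Prod.le_def]
      exact ⟨Fin.le_def.2 (by omega), Fin.le_def.2 (by omega)⟩
    · intro hle'
      rw [Prod.le_def, Fin.le_def, Fin.le_def] at hle'
      exact grid_le' τp _ _ _ _ (by omega) (by omega)
  · -- rank 2 case
    intro hrank
    have hrank' : n - k = 2 := hrank
    have hμ := mu_grid hk2 hp hnq hf2 hfv huniq2 n 0 (by omega) (by omega) (by omega)
    show qMu ⟨k, σp⟩ ⟨n, τp⟩ = 1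
    rw [heqτ, hμ]
    rw [if_neg (show ¬(0 = p) by omega), if_pos (show 0 + 1 = p by omega),
      if_neg (show ¬(0 + n = p + k) by omega), if_pos (show 0 + n = p + k + 1 by omega)]
    norm_num
  · -- other ranks
    intro hrank
    have hrank' : n - k ≠ 2 := hrank
    have hμ := mu_grid hk2 hp hnq hf2 hfv huniq2 n 0 (by omega) (by omega) (by omega)
    show qMu ⟨k, σp⟩ ⟨n, τp⟩ = 0
    rw [heqτ, hμ]
    rcases (show 2 ≤ p ∨ 2 ≤ q by omega) with hc | hc
    · rw [if_neg (show ¬(0 = p) by omega), if_neg (show ¬(0 + 1 = p) by omega)]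
      norm_num
    · rw [if_neg (show ¬(0 + n = p + k) by omega), if_neg (show ¬(0 + n = p + k + 1) by omega)]
      norm_num
end
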